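/- Let A ∈ B(H)^d and B ∈ B(K)^d be d-tuples of operators. Then the one-sided matrix range distance d_mr(A→B) := sup_n sup_{X ∈ W_n(A)} inf_{Y ∈ W_n(B)} ‖X - Y‖ satisfies d_mr(A→B) ≤ inf{ ‖A - Ψ(B)‖ : Ψ a unital completely positive map from the operator system of B to B(H) }. -/

import Mathlib

open scoped Matrix.Norms.L2Operator

set_option synthInstance.maxHeartbeats 1000000
set_option maxHeartbeats 1000000

/-- A linear map between complex star algebras is *unital completely positive* if it is unital
and, for every `n`, the entrywise induced map on `n × n` matrices maps positive elements
(elements of the form `y* y`) to positive elements. -/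
def IsUCP {A B : Type*} [Ring A] [StarRing A] [Algebra ℂ A] [Ring B] [StarRing B] [Algebra ℂ B]
    (Φ : A →ₗ[ℂ] B) : Prop :=
  Φ 1 = 1 ∧ ∀ (n : ℕ) (x : Matrix (Fin n) (Fin n) A),
    (∃ y : Matrix (Fin n) (Fin n) A, x = star y * y) → ∃ z : Matrix (Fin n) (Fin n) B, x.map Φ = star z * z

/-- The `n`-th level of the matrix range of a `d`-tuple `A` of operators:
`W_n(A) = {(φ(A_1),…,φ(A_d)) : φ : B(H) → M_n UCP}`. -/
def matRange {d : ℕ} {H : Type*} [NormedAddCommGroup H] [InnerProductSpace ℂ H]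
    [CompleteSpace H] (A : Fin d → H →L[ℂ] H) (n : ℕ) :
    Set (Fin d → Matrix (Fin n) (Fin n) ℂ) :=
  {X | ∃ φ : (H →L[ℂ] H) →ₗ[ℂ] Matrix (Fin n) (Fin n) ℂ, IsUCP φ ∧ X = fun i => φ (A i)}

/- ### Auxiliary lemmas -/

section Aux

open scoped ComplexOrder Matrix

/-- Composition of UCP maps is UCP. -/
lemma IsUCP.comp' {A B C : Type*} [Ring A] [StarRing A] [Algebra ℂ A]
    [Ring B] [StarRing B] [Algebra ℂ B] [Ring C] [StarRing C] [Algebra ℂ C]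
    {φ : A →ₗ[ℂ] B} {ψ : B →ₗ[ℂ] C} (hψ : IsUCP ψ) (hφ : IsUCP φ) : IsUCP (ψ ∘ₗ φ) := by
  constructor
  · simp [LinearMap.comp_apply, hφ.1, hψ.1]
  · intro n x hx
    obtain ⟨z, hz⟩ := hφ.2 n x hx
    obtain ⟨w, hw⟩ := hψ.2 n (x.map φ) ⟨z, hz⟩
    refine ⟨w, ?_⟩
    rw [← hw, Matrix.map_map]
    rfl

open ContinuousLinearMap in
/-- The key analytic inequality `‖b‖ ≤ c` for the off-diagonal corner of a positive
`2 × 2` operator matrix with diagonal `c • 1`. -/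
lemma corner_bound {E : Type*} [NormedAddCommGroup E] [InnerProductSpace ℂ E] [CompleteSpace E]
    (c : ℝ) (hc : 0 ≤ c) (a₀ a₁ d₀ d₁ b : E →L[ℂ] E)
    (h0 : star a₀ * a₀ + star a₁ * a₁ = (c : ℂ) • 1)
    (h1 : star d₀ * d₀ + star d₁ * d₁ = (c : ℂ) • 1)
    (hb : b = star a₀ * d₀ + star a₁ * d₁) : ‖b‖ ≤ c := by
  have e : ∀ x : E, (inner ℂ x x : ℂ).re = ‖x‖ ^ 2 := fun x => by
    rw [← RCLike.re_to_complex]; exact inner_self_eq_norm_sq (𝕜 := ℂ) x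
  have e' : ∀ x : E, (inner ℂ x x : ℂ).im = 0 := fun x => by
    rw [← RCLike.im_to_complex]; exact inner_self_im (𝕜 := ℂ) x
  have key : ∀ (p q : E →L[ℂ] E) (w : E), star p * p + star q * q = (c : ℂ) • 1 →
      ‖p w‖ ^ 2 + ‖q w‖ ^ 2 = c * ‖w‖ ^ 2 := by
    intro p q w h
    have := congrArg (fun (S : E →L[ℂ] E) => (inner ℂ (S w) w : ℂ).re) h
    simp only [add_apply, mul_apply, smul_apply, one_apply, inner_add_left,
      inner_smul_left, star_eq_adjoint, ContinuousLinearMap.adjoint_inner_left] at this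
    simpa [Complex.add_re, Complex.mul_re, e, e', ContinuousLinearMap.adjoint_inner_left, ← Complex.ofReal_pow, Complex.ofReal_re] using this
  refine opNorm_le_bound b hc fun v => ?_
  have hip : ∀ u : E, (inner ℂ u (b v) : ℂ) = inner ℂ (a₀ u) (d₀ v) + inner ℂ (a₁ u) (d₁ v) := by
    intro u
    rw [hb]
    simp [inner_add_right, star_eq_adjoint, mul_apply, adjoint_inner_right]
  have h2 : ‖b v‖ ^ 2 ≤ ‖a₀ (b v)‖ * ‖d₀ v‖ + ‖a₁ (b v)‖ * ‖d₁ v‖ := by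
    calc ‖b v‖ ^ 2 = ‖(inner ℂ (b v) (b v) : ℂ)‖ := by
          rw [inner_self_eq_norm_sq_to_K]
          simp [norm_pow, Complex.norm_real]
      _ = ‖(inner ℂ (a₀ (b v)) (d₀ v) : ℂ) + inner ℂ (a₁ (b v)) (d₁ v)‖ := by rw [hip (b v)]
      _ ≤ ‖(inner ℂ (a₀ (b v)) (d₀ v) : ℂ)‖ + ‖(inner ℂ (a₁ (b v)) (d₁ v) : ℂ)‖ := norm_add_le _ _
      _ ≤ ‖a₀ (b v)‖ * ‖d₀ v‖ + ‖a₁ (b v)‖ * ‖d₁ v‖ := by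
          gcongr <;> exact norm_inner_le_norm _ _
  have ha := key a₀ a₁ (b v) h0
  have hd := key d₀ d₁ v h1
  rcases eq_or_lt_of_le (norm_nonneg (b v)) with h | h
  · rw [← h]; positivity
  · have hP2 : (‖a₀ (b v)‖ * ‖d₀ v‖ + ‖a₁ (b v)‖ * ‖d₁ v‖) ^ 2
        ≤ (c * ‖b v‖ ^ 2) * (c * ‖v‖ ^ 2) := by
      nlinarith [sq_nonneg (‖a₀ (b v)‖ * ‖d₁ v‖ - ‖a₁ (b v)‖ * ‖d₀ v‖), ha, hd]
    have hX2 : (‖b v‖ ^ 2) ^ 2 ≤ (c * ‖b v‖ ^ 2) * (c * ‖v‖ ^ 2) := by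
      nlinarith [h2, sq_nonneg (‖b v‖)]
    have hbv : ‖b v‖ ^ 2 ≤ c ^ 2 * ‖v‖ ^ 2 := by
      have hpos : (0:ℝ) < ‖b v‖ ^ 2 := by positivity
      nlinarith [hX2]
    nlinarith [hbv, norm_nonneg v, mul_nonneg hc (norm_nonneg v), h]

/-- Matrix version of `corner_bound`, for the L2 operator norm. -/
lemma matrix_corner {n : ℕ} (c : ℝ) (hc : 0 ≤ c)
    (z M : Matrix (Fin 2) (Fin 2) (Matrix (Fin n) (Fin n) ℂ))
    (hM : M = star z * z) (h00 : M 0 0 = (c : ℂ) • 1) (h11 : M 1 1 = (c : ℂ) • 1) :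
    ‖M 0 1‖ ≤ c := by
  let e := Matrix.toEuclideanCLM (n := Fin n) (𝕜 := ℂ)
  have entry : ∀ i j, M i j = star (z 0 i) * z 0 j + star (z 1 i) * z 1 j := by
    intro i j
    rw [hM]
    simp [Matrix.mul_apply, Fin.sum_univ_two, Matrix.star_apply]
  have key : ‖e (M 0 1)‖ ≤ c := by
    refine corner_bound c hc (e (z 0 0)) (e (z 1 0)) (e (z 0 1)) (e (z 1 1)) (e (M 0 1)) ?_ ?_ ?_
    · rw [← map_star, ← map_star, ← map_mul, ← map_mul, ← map_add, ← entry, h00]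
      rw [map_smul, map_one]
    · rw [← map_star, ← map_star, ← map_mul, ← map_mul, ← map_add, ← entry, h11]
      rw [map_smul, map_one]
    · rw [← map_star, ← map_star, ← map_mul, ← map_mul, ← map_add, ← entry]
  rw [Matrix.cstar_norm_def]
  exact key

lemma coe_smul' {H : Type*} [NormedAddCommGroup H] [InnerProductSpace ℂ H]
    (r : ℝ) (x : H →L[ℂ] H) : (r : ℂ) • x = r • x := by
  rw [Complex.coe_smul]

/-- The `2 × 2` operator matrix `!![‖T‖ • 1, T; T*, ‖T‖ • 1]` is positive. -/
lemma exists_corner_sq {H : Type*} [NormedAddCommGroup H] [InnerProductSpace ℂ H]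
    [CompleteSpace H] (T : H →L[ℂ] H) :
    ∃ y : Matrix (Fin 2) (Fin 2) (H →L[ℂ] H),
      !![((‖T‖ : ℂ)) • 1, T; star T, ((‖T‖ : ℂ)) • 1] = star y * y := by
  rcases eq_or_ne T 0 with rfl | hT
  · refine ⟨0, ?_⟩
    ext i j
    fin_cases i <;> fin_cases j <;>
      simp [Matrix.mul_apply, Fin.sum_univ_two, Matrix.star_apply]
  · set c : ℝ := ‖T‖ with hcdef
    have hc : 0 < c := norm_pos_iff.mpr hT
    set s : ℝ := Real.sqrt c with hsdef
    have hs : 0 < s := Real.sqrt_pos.mpr hc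
    have hss : (s : ℂ) * s = c := by exact_mod_cast congrArg (Complex.ofReal) (Real.mul_self_sqrt hc.le)
    have hsne : (s : ℂ) ≠ 0 := by exact_mod_cast hs.ne'
    set D : H →L[ℂ] H := (c : ℂ) • 1 - ((c⁻¹ : ℝ) : ℂ) • (star T * T) with hDdef
    have hD : 0 ≤ D := by
      rw [hDdef, sub_nonneg, coe_smul', coe_smul']
      have h1 : star T * T ≤ algebraMap ℝ _ ‖star T * T‖ :=
        IsSelfAdjoint.le_algebraMap_norm_self
      have h2 : ‖star T * T‖ = c * c := CStarRing.norm_star_mul_self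
      rw [h2, Algebra.algebraMap_eq_smul_one] at h1
      calc c⁻¹ • (star T * T) ≤ c⁻¹ • ((c * c) • (1 : H →L[ℂ] H)) :=
            smul_le_smul_of_nonneg_left h1 (by positivity)
        _ = c • (1 : H →L[ℂ] H) := by
            rw [smul_smul]; congr 1; field_simp
    have hsqrt : CFC.sqrt D * CFC.sqrt D = D := CFC.sqrt_mul_sqrt_self D hD
    have hsa : star (CFC.sqrt D) = CFC.sqrt D := (CFC.sqrt_nonneg (a := D)).isSelfAdjoint
    have hssr : s * s = c := Real.mul_self_sqrt hc.le
    refine ⟨!![(s : ℂ) • 1, ((s⁻¹ : ℝ) : ℂ) • T; 0, CFC.sqrt D], ?_⟩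
    ext i j
    fin_cases i <;> fin_cases j <;>
      simp [Matrix.mul_apply, Fin.sum_univ_two, Matrix.star_apply, star_smul,
        Complex.star_def, Complex.conj_ofReal, smul_smul, hss, mul_smul_comm, smul_mul_assoc]
    · rw [hssr]
    · rw [← Complex.coe_smul, smul_smul, inv_mul_cancel₀ hsne, one_smul]
    · rw [← Complex.coe_smul, smul_smul, mul_inv_cancel₀ hsne, one_smul]
    · rename_i x
      have h5 : (star (CFC.sqrt D)) ((CFC.sqrt D) x) = D x := by
        rw [← ContinuousLinearMap.mul_apply, hsa, hsqrt]
      have h4 : ((s : ℂ))⁻¹ * ((s : ℂ))⁻¹ = ((c⁻¹ : ℝ) : ℂ) := by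
        rw [Complex.ofReal_inv, ← mul_inv, hss]
      rw [h5, h4, hDdef]
      simp only [ContinuousLinearMap.sub_apply, ContinuousLinearMap.smul_apply,
        ContinuousLinearMap.one_apply, ContinuousLinearMap.mul_apply, Complex.coe_smul]
      abel

/-- UCP maps into matrix algebras are contractive. -/
lemma ucp_norm_le {H : Type*} [NormedAddCommGroup H] [InnerProductSpace ℂ H] [CompleteSpace H]
    {n : ℕ} (φ : (H →L[ℂ] H) →ₗ[ℂ] Matrix (Fin n) (Fin n) ℂ) (hφ : IsUCP φ)
    (T : H →L[ℂ] H) : ‖φ T‖ ≤ ‖T‖ := by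
  obtain ⟨y, hy⟩ := exists_corner_sq T
  set M : Matrix (Fin 2) (Fin 2) (H →L[ℂ] H) :=
    !![((‖T‖ : ℂ)) • 1, T; star T, ((‖T‖ : ℂ)) • 1] with hMdef
  obtain ⟨z, hz⟩ := hφ.2 2 M ⟨y, hy⟩
  have h01 : (M.map φ) 0 1 = φ T := by simp [hMdef, Matrix.map_apply]
  have h00 : (M.map φ) 0 0 = ((‖T‖ : ℂ)) • 1 := by
    simp [hMdef, Matrix.map_apply, map_smul, hφ.1]
  have h11 : (M.map φ) 1 1 = ((‖T‖ : ℂ)) • 1 := by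
    simp [hMdef, Matrix.map_apply, map_smul, hφ.1]
  have := matrix_corner ‖T‖ (norm_nonneg T) z (M.map φ) hz h00 h11
  rwa [h01] at this

open scoped MatrixOrder in
/-- A positive semidefinite scalar matrix maps to a positive element under `algebraMap`. -/
lemma psd_map_algebraMap {B : Type*} [Ring B] [StarRing B] [Algebra ℂ B] [StarModule ℂ B]
    {k : ℕ} (G : Matrix (Fin k) (Fin k) ℂ) (hG : G.PosSemidef) :
    ∃ z : Matrix (Fin k) (Fin k) B, G.map (algebraMap ℂ B) = star z * z := by
  obtain ⟨m, hm⟩ : ∃ m : Matrix (Fin k) (Fin k) ℂ, star m * m = G :=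
    ⟨CFC.sqrt G, by
      have hG0 : (0 : Matrix (Fin k) (Fin k) ℂ) ≤ G := Matrix.nonneg_iff_posSemidef.mpr hG
      rw [(CFC.sqrt_nonneg G).isSelfAdjoint.star_eq, CFC.sqrt_mul_sqrt_self G hG0]⟩
  refine ⟨m.map (algebraMap ℂ B), ?_⟩
  rw [← hm]
  ext i j
  rw [Matrix.map_apply]
  simp only [Matrix.mul_apply, Matrix.conjTranspose_apply, Matrix.star_apply, map_sum, map_mul,
    Matrix.map_apply]
  congr 1
  ext l
  rw [← algebraMap_star_comm]

/-- From a UCP map into a (nontrivial) matrix algebra one obtains a UCP map into `B(H)`. -/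
lemma exists_ucp_to_blh {H K : Type*}
    [NormedAddCommGroup H] [InnerProductSpace ℂ H] [CompleteSpace H]
    [NormedAddCommGroup K] [InnerProductSpace ℂ K] [CompleteSpace K]
    {n : ℕ} (hn : 0 < n) (φ : (K →L[ℂ] K) →ₗ[ℂ] Matrix (Fin n) (Fin n) ℂ) (hφ : IsUCP φ) :
    ∃ Ψ : (K →L[ℂ] K) →ₗ[ℂ] (H →L[ℂ] H), IsUCP Ψ := by
  let i0 : Fin n := ⟨0, hn⟩
  refine ⟨{ toFun := fun T => algebraMap ℂ (H →L[ℂ] H) ((φ T) i0 i0)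
            map_add' := fun S T => by simp [map_add, Matrix.add_apply]
            map_smul' := fun c T => by
              simp only [map_smul, Matrix.smul_apply, smul_eq_mul, map_mul, RingHom.id_apply,
                ← Algebra.smul_def] }, ?_, ?_⟩
  · simp only [LinearMap.coe_mk, AddHom.coe_mk]
    rw [hφ.1, Matrix.one_apply_eq, map_one]
  · intro k x hx
    obtain ⟨z, hz⟩ := hφ.2 k x hx
    set G : Matrix (Fin k) (Fin k) ℂ := Matrix.of (fun i j => (φ (x i j)) i0 i0) with hGdef
    have hG : G.PosSemidef := by
      let v : Matrix (Fin k × Fin n) (Fin k) ℂ :=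
        Matrix.of (fun (lp : Fin k × Fin n) (i : Fin k) => z lp.1 i lp.2 i0)
      have : G = vᴴ * v := by
        ext i j
        have h1 : (x.map φ) i j = (star z * z) i j := by rw [hz]
        simp only [Matrix.map_apply] at h1
        rw [hGdef]
        simp only [Matrix.of_apply, h1, Matrix.mul_apply, Matrix.star_apply,
          Matrix.conjTranspose_apply, Finset.sum_apply, Matrix.sum_apply]
        rw [Fintype.sum_prod_type]
        rfl
      rw [this]
      exact Matrix.posSemidef_conjTranspose_mul_self _
    obtain ⟨w, hw⟩ := psd_map_algebraMap (B := H →L[ℂ] H) G hG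
    refine ⟨w, ?_⟩
    rw [← hw]
    ext i j
    simp [Matrix.map_apply, hGdef]

end Aux

/-- For `d`-tuples `A ∈ B(H)^d`, `B ∈ B(K)^d`, the one-sided matrix range
distance `d_mr(A→B) = sup_n sup_{X ∈ W_n(A)} inf_{Y ∈ W_n(B)} ‖X - Y‖` is at most
`inf{‖A - Ψ(B)‖ : Ψ : B(K) → B(H) UCP}`. -/
theorem stmt_11 {d : ℕ} {H K : Type*}
    [NormedAddCommGroup H] [InnerProductSpace ℂ H] [CompleteSpace H]
    [NormedAddCommGroup K] [InnerProductSpace ℂ K] [CompleteSpace K]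
    (A : Fin d → H →L[ℂ] H) (B : Fin d → K →L[ℂ] K) :
    (⨆ n : ℕ, sSup {r : ℝ | ∃ X ∈ matRange A n,
        r = sInf {s : ℝ | ∃ Y ∈ matRange B n, s = ⨆ i, ‖X i - Y i‖}}) ≤
      sInf {r : ℝ | ∃ Ψ : (K →L[ℂ] K) →ₗ[ℂ] (H →L[ℂ] H), IsUCP Ψ ∧
        r = ⨆ i, ‖A i - Ψ (B i)‖} := by
  set R : Set ℝ := {r : ℝ | ∃ Ψ : (K →L[ℂ] K) →ₗ[ℂ] (H →L[ℂ] H), IsUCP Ψ ∧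
    r = ⨆ i, ‖A i - Ψ (B i)‖} with hRdef
  have hRnonneg : ∀ r ∈ R, 0 ≤ r := by
    rintro r ⟨Ψ, hΨ, rfl⟩
    exact Real.iSup_nonneg fun i => norm_nonneg _
  have hC0 : 0 ≤ sInf R := Real.sInf_nonneg hRnonneg
  refine ciSup_le fun n => ?_
  refine Real.sSup_le ?_ hC0
  rintro r ⟨X, hX, rfl⟩
  set T : Set ℝ := {s : ℝ | ∃ Y ∈ matRange B n, s = ⨆ i, ‖X i - Y i‖} with hTdef
  have hTnonneg : ∀ s ∈ T, 0 ≤ s := by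
    rintro s ⟨Y, hY, rfl⟩
    exact Real.iSup_nonneg fun i => norm_nonneg _
  have hTbdd : BddBelow T := ⟨0, fun s hs => hTnonneg s hs⟩
  by_cases hRne : R.Nonempty
  · -- there is some UCP map Ψ : B(K) → B(H)
    obtain ⟨φ, hφ, hXeq⟩ := hX
    refine le_csInf hRne ?_
    rintro q ⟨Ψ, hΨ, rfl⟩
    have hYmem : (fun i => φ (Ψ (B i))) ∈ matRange B n := ⟨φ ∘ₗ Ψ, hφ.comp' hΨ, rfl⟩
    refine csInf_le_of_le hTbdd ⟨_, hYmem, rfl⟩ ?_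
    refine Real.iSup_le (fun i => ?_) (Real.iSup_nonneg fun i => norm_nonneg _)
    calc ‖X i - φ (Ψ (B i))‖ = ‖φ (A i - Ψ (B i))‖ := by rw [hXeq, map_sub]
      _ ≤ ‖A i - Ψ (B i)‖ := ucp_norm_le φ hφ _
      _ ≤ ⨆ i, ‖A i - Ψ (B i)‖ :=
          le_ciSup (f := fun i => ‖A i - Ψ (B i)‖)
            (Set.Finite.bddAbove (Set.finite_range _)) i
  · -- no UCP map B(K) → B(H) exists
    have hRempty : R = ∅ := Set.not_nonempty_iff_eq_empty.mp hRne
    have hRinf : sInf R = 0 := by rw [hRempty, Real.sInf_empty]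
    rw [hRinf]
    rcases Nat.eq_zero_or_pos n with hn | hn
    · subst hn
      have hY0 : (fun i => (0 : (K →L[ℂ] K) →ₗ[ℂ] Matrix (Fin 0) (Fin 0) ℂ) (B i)) ∈
          matRange B 0 :=
        ⟨0, ⟨Subsingleton.elim _ _, fun k x _ => ⟨0, Subsingleton.elim _ _⟩⟩, rfl⟩
      have h0T : (0 : ℝ) ∈ T := by
        refine ⟨_, hY0, ?_⟩
        have : ∀ i : Fin d, ‖X i - (0 : (K →L[ℂ] K) →ₗ[ℂ] Matrix (Fin 0) (Fin 0) ℂ) (B i)‖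
            = 0 := by
          intro i
          rw [Subsingleton.elim (X i - _) 0, norm_zero]
        simp only [this]
        rw [Real.iSup_const_zero]
      exact csInf_le hTbdd h0T
    · -- n > 0 : matRange B n must be empty
      have hTempty : T = ∅ := by
        rw [Set.eq_empty_iff_forall_notMem]
        rintro s ⟨Y, ⟨ψ, hψ, _⟩, _⟩
        obtain ⟨Ψ, hΨ⟩ := exists_ucp_to_blh (H := H) hn ψ hψ
        exact hRne ⟨_, Ψ, hΨ, rfl⟩
      rw [hTempty, Real.sInf_empty]
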